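/- Fractional iteration gives an ordered group isomorphism: for h ≠ x in S^{>,≻}, the map r ↦ h^[r] := V^inv∘(V + r) (for any V with V∘h = V + 1) is an isomorphism of ordered groups from (R, +, 0, <) onto the centralizer (C(h), ∘, x, <), with h^[1] = h; moreover (h^[r₀])^[r₁] = h^[r₀·r₁]. -/

import Mathlib

/-- `s` is positive infinite: `s > R`. -/
def PosInf {T : Type*} [Field T] [LinearOrder T] [IsStrictOrderedRing T] (R : Subfield T) (s : T) : Prop :=
  ∀ r ∈ R, r < s

/-- The fractional iterate `h^[r] := V⁻ⁱⁿᵛ ∘ (V + r)` of a series `h` with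
Abel function `V` (i.e. `V∘h = V + 1`). -/
def iterOf {T : Type*} (comp : T → T → T) [Add T] (Vinv V r : T) : T :=
  comp Vinv (V + r)

/-- fractional iteration gives an ordered-group isomorphism:
for `h > x` with Abel function `V` (any two such differ by a constant, so
`h^[r] := Vinv∘(V + r)` is well defined), the map `r ↦ h^[r]` is an
isomorphism of ordered groups from `(R, +, 0, <)` onto the centralizer
`(C(h), ∘, x, <)`, with `h^[1] = h`; moreover `(h^[r₀])^[r₁] = h^[r₀·r₁]`
(phrased via any Abel function `U` of `h^[r₀]`). -/
theorem fractional_iteration_iso (T : Type*) [Field T] [LinearOrder T] [IsStrictOrderedRing T]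
    (R : Subfield T) (comp : T → T → T) (x : T)
    (hx : PosInf R x)
    (comp_add : ∀ f g s : T, PosInf R s → comp (f + g) s = comp f s + comp g s)
    (comp_mul : ∀ f g s : T, PosInf R s → comp (f * g) s = comp f s * comp g s)
    (comp_const : ∀ r : T, r ∈ R → ∀ s : T, PosInf R s → comp r s = r)
    (comp_id_left : ∀ s : T, PosInf R s → comp x s = s)
    (comp_id_right : ∀ f : T, comp f x = f)
    (comp_assoc : ∀ f g s : T, PosInf R g → PosInf R s →
      comp (comp f g) s = comp f (comp g s))
    (comp_posinf : ∀ f s : T, PosInf R f → PosInf R s → PosInf R (comp f s))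
    (comp_strictMono_left : ∀ s : T, PosInf R s → StrictMono (fun f => comp f s))
    -- monotonicity: composition with a positive infinite series on the left
    (comp_strictMono_right : ∀ g s t : T, PosInf R g → PosInf R s → PosInf R t →
      s < t → comp g s < comp g t)
    -- the centralizer of x + 1 equals x + R (previous result)
    (hC : ∀ g : T, PosInf R g → comp g (x + 1) = comp (x + 1) g →
      ∃ r : T, r ∈ R ∧ g = x + r)
    (h V Vinv : T) (hh : PosInf R h) (hhx : x < h)
    (hV : PosInf R V) (hVabel : comp V h = V + 1)
    (hVinv : PosInf R Vinv) (hVVinv : comp V Vinv = x) (hVinvV : comp Vinv V = x) :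
    -- h^[1] = h
    iterOf comp Vinv V 1 = h ∧
    -- each h^[r] lies in the centralizer of h
    (∀ r : T, r ∈ R → PosInf R (iterOf comp Vinv V r) ∧
      comp (iterOf comp Vinv V r) h = comp h (iterOf comp Vinv V r)) ∧
    -- every element of the centralizer of h is some h^[r]
    (∀ g : T, PosInf R g → comp g h = comp h g →
      ∃ r : T, r ∈ R ∧ g = iterOf comp Vinv V r) ∧
    -- group morphism: h^[r₀ + r₁] = h^[r₀] ∘ h^[r₁]
    (∀ r₀ : T, r₀ ∈ R → ∀ r₁ : T, r₁ ∈ R →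
      iterOf comp Vinv V (r₀ + r₁) =
        comp (iterOf comp Vinv V r₀) (iterOf comp Vinv V r₁)) ∧
    -- strictly increasing
    (∀ r₀ : T, r₀ ∈ R → ∀ r₁ : T, r₁ ∈ R → r₀ < r₁ →
      iterOf comp Vinv V r₀ < iterOf comp Vinv V r₁) ∧
    -- iteration law: (h^[r₀])^[r₁] = h^[r₀·r₁]
    (∀ r₀ : T, r₀ ∈ R → ∀ r₁ : T, r₁ ∈ R → ∀ U Uinv : T,
      PosInf R U → comp U (iterOf comp Vinv V r₀) = U + 1 →
      PosInf R Uinv → comp U Uinv = x → comp Uinv U = x →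
      iterOf comp Uinv U r₁ = iterOf comp Vinv V (r₀ * r₁)) := by
  have h1R : (1:T) ∈ R := R.one_mem
  have hVr : ∀ r ∈ R, PosInf R (V + r) := by
    intro r hr s hs
    have := hV (s - r) (R.sub_mem hs hr)
    linarith
  have hIpos : ∀ r ∈ R, PosInf R (iterOf comp Vinv V r) :=
    fun r hr => comp_posinf Vinv (V + r) hVinv (hVr r hr)
  have hVI : ∀ r ∈ R, comp V (iterOf comp Vinv V r) = V + r := by
    intro r hr
    show comp V (comp Vinv (V + r)) = V + r
    rw [← comp_assoc V Vinv (V + r) hVinv (hVr r hr), hVVinv, comp_id_left _ (hVr r hr)]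
  have hI1 : iterOf comp Vinv V 1 = h := by
    show comp Vinv (V + 1) = h
    rw [← hVabel, ← comp_assoc Vinv V h hV hh, hVinvV, comp_id_left h hh]
  have hI0 : iterOf comp Vinv V 0 = x := by
    show comp Vinv (V + 0) = x
    rw [add_zero, hVinvV]
  have hgrp : ∀ r₀ ∈ R, ∀ r₁ ∈ R,
      iterOf comp Vinv V (r₀ + r₁) = comp (iterOf comp Vinv V r₀) (iterOf comp Vinv V r₁) := by
    intro r₀ h₀ r₁ h₁
    show comp Vinv (V + (r₀ + r₁)) = comp (comp Vinv (V + r₀)) (iterOf comp Vinv V r₁)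
    rw [comp_assoc Vinv (V + r₀) _ (hVr r₀ h₀) (hIpos r₁ h₁),
        comp_add V r₀ _ (hIpos r₁ h₁), comp_const r₀ h₀ _ (hIpos r₁ h₁), hVI r₁ h₁]
    congr 1
    ring
  have hmono : ∀ r₀ ∈ R, ∀ r₁ ∈ R, r₀ < r₁ →
      iterOf comp Vinv V r₀ < iterOf comp Vinv V r₁ := by
    intro r₀ h₀ r₁ h₁ hlt
    exact comp_strictMono_right Vinv (V + r₀) (V + r₁) hVinv (hVr r₀ h₀) (hVr r₁ h₁)
      (by linarith)
  have hcent : ∀ r ∈ R, comp (iterOf comp Vinv V r) h = comp h (iterOf comp Vinv V r) := by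
    intro r hr
    rw [← hI1, ← hgrp r hr 1 h1R, ← hgrp 1 h1R r hr, add_comm r 1]
  have hsurj : ∀ g : T, PosInf R g → comp g h = comp h g →
      ∃ r : T, r ∈ R ∧ g = iterOf comp Vinv V r := by
    intro g hg hgh
    have hgVpos : PosInf R (comp g Vinv) := comp_posinf g Vinv hg hVinv
    have hg'pos : PosInf R (comp V (comp g Vinv)) := comp_posinf V _ hV hgVpos
    have hhVpos : PosInf R (comp h Vinv) := comp_posinf h Vinv hh hVinv
    have key : comp V (comp h Vinv) = x + 1 := by
      rw [← comp_assoc V h Vinv hh hVinv, hVabel, comp_add V 1 Vinv hVinv,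
          comp_const 1 h1R Vinv hVinv, hVVinv]
    have hVP : PosInf R (comp V (comp h Vinv)) := comp_posinf V _ hV hhVpos
    have step : comp (comp V (comp g Vinv)) (x + 1) = comp V (comp g Vinv) + 1 := by
      rw [← key, comp_assoc V (comp g Vinv) _ hgVpos hVP,
          comp_assoc g Vinv _ hVinv hVP, ← comp_assoc Vinv V _ hV hhVpos,
          hVinvV, comp_id_left _ hhVpos, ← comp_assoc g h Vinv hh hVinv, hgh,
          comp_assoc h g Vinv hg hVinv, ← comp_assoc V h _ hh hgVpos, hVabel,
          comp_add V 1 _ hgVpos, comp_const 1 h1R _ hgVpos]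
    have hcomm' : comp (comp V (comp g Vinv)) (x + 1) = comp (x + 1) (comp V (comp g Vinv)) := by
      rw [step, comp_add x 1 _ hg'pos, comp_id_left _ hg'pos, comp_const 1 h1R _ hg'pos]
    obtain ⟨r, hrR, hg'eq⟩ := hC _ hg'pos hcomm'
    refine ⟨r, hrR, ?_⟩
    have hrecover : comp Vinv (comp (comp V (comp g Vinv)) V) = g := by
      rw [comp_assoc V (comp g Vinv) V hgVpos hV, comp_assoc g Vinv V hVinv hV,
          hVinvV, comp_id_right g, ← comp_assoc Vinv V g hV hg, hVinvV, comp_id_left g hg]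
    calc g = comp Vinv (comp (comp V (comp g Vinv)) V) := hrecover.symm
      _ = comp Vinv (V + r) := by
          rw [hg'eq, comp_add x r V hV, comp_id_left V hV, comp_const r hrR V hV]
      _ = iterOf comp Vinv V r := rfl
  refine ⟨hI1, fun r hr => ⟨hIpos r hr, hcent r hr⟩, hsurj, hgrp, hmono, ?_⟩
  intro r₀ h₀ r₁ h₁ U Uinv hUpos hUabel hUinvpos hUUinv hUinvU
  have hr₀ne : r₀ ≠ 0 := by
    intro h0
    rw [h0, hI0, comp_id_right] at hUabel
    linarith
  have hr₀pos : 0 < r₀ := by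
    rcases lt_trichotomy r₀ 0 with hlt | h0 | hgt
    · exfalso
      have h2 : iterOf comp Vinv V r₀ < x := by
        rw [← hI0]; exact hmono r₀ h₀ 0 R.zero_mem hlt
      have h3 := comp_strictMono_right U _ x hUpos (hIpos r₀ h₀) hx h2
      rw [hUabel, comp_id_right] at h3
      linarith
    · exact absurd h0 hr₀ne
    · exact hgt
  have hr₀invR : r₀⁻¹ ∈ R := R.inv_mem h₀
  have hr₀invpos : 0 < r₀⁻¹ := inv_pos.mpr hr₀pos
  have hWpos : PosInf R (r₀⁻¹ * V) := by
    intro r hr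
    have h1 : r₀ * r < V := hV _ (R.mul_mem h₀ hr)
    calc r = r₀⁻¹ * (r₀ * r) := by rw [← mul_assoc, inv_mul_cancel₀ hr₀ne, one_mul]
      _ < r₀⁻¹ * V := mul_lt_mul_of_pos_left h1 hr₀invpos
  have hr₀x : PosInf R (r₀ * x) := by
    intro r hr
    have h1 : r₀⁻¹ * r < x := hx _ (R.mul_mem hr₀invR hr)
    calc r = r₀ * (r₀⁻¹ * r) := by rw [← mul_assoc, mul_inv_cancel₀ hr₀ne, one_mul]
      _ < r₀ * x := mul_lt_mul_of_pos_left h1 hr₀pos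
  have hWinvpos : PosInf R (comp Vinv (r₀ * x)) := comp_posinf _ _ hVinv hr₀x
  have hVWinv : comp V (comp Vinv (r₀ * x)) = r₀ * x := by
    rw [← comp_assoc V Vinv (r₀ * x) hVinv hr₀x, hVVinv, comp_id_left _ hr₀x]
  have hWWinv : comp (r₀⁻¹ * V) (comp Vinv (r₀ * x)) = x := by
    rw [comp_mul r₀⁻¹ V _ hWinvpos, comp_const r₀⁻¹ hr₀invR _ hWinvpos, hVWinv,
        ← mul_assoc, inv_mul_cancel₀ hr₀ne, one_mul]
  have hWinvW : comp (comp Vinv (r₀ * x)) (r₀⁻¹ * V) = x := by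
    rw [comp_assoc Vinv (r₀ * x) _ hr₀x hWpos, comp_mul r₀ x _ hWpos,
        comp_const r₀ h₀ _ hWpos, comp_id_left _ hWpos, ← mul_assoc,
        mul_inv_cancel₀ hr₀ne, one_mul, hVinvV]
  have hWabel : comp (r₀⁻¹ * V) (iterOf comp Vinv V r₀) = r₀⁻¹ * V + 1 := by
    rw [comp_mul r₀⁻¹ V _ (hIpos r₀ h₀), comp_const r₀⁻¹ hr₀invR _ (hIpos r₀ h₀),
        hVI r₀ h₀, mul_add, inv_mul_cancel₀ hr₀ne]
  have hDpos : PosInf R (comp U (comp Vinv (r₀ * x))) := comp_posinf _ _ hUpos hWinvpos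
  have hQpos : PosInf R (comp (iterOf comp Vinv V r₀) (comp Vinv (r₀ * x))) :=
    comp_posinf _ _ (hIpos r₀ h₀) hWinvpos
  have keyW : comp (r₀⁻¹ * V) (comp (iterOf comp Vinv V r₀) (comp Vinv (r₀ * x))) = x + 1 := by
    rw [← comp_assoc _ _ _ (hIpos r₀ h₀) hWinvpos, hWabel,
        comp_add _ 1 _ hWinvpos, comp_const 1 h1R _ hWinvpos, hWWinv]
  have step2 : comp (comp U (comp Vinv (r₀ * x))) (x + 1)
      = comp U (comp Vinv (r₀ * x)) + 1 := by
    rw [← keyW, comp_assoc U _ _ hWinvpos (comp_posinf _ _ hWpos hQpos),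
        ← comp_assoc _ _ _ hWpos hQpos, hWinvW, comp_id_left _ hQpos,
        ← comp_assoc U _ _ (hIpos r₀ h₀) hWinvpos, hUabel,
        comp_add U 1 _ hWinvpos, comp_const 1 h1R _ hWinvpos]
  have hcommD : comp (comp U (comp Vinv (r₀ * x))) (x + 1)
      = comp (x + 1) (comp U (comp Vinv (r₀ * x))) := by
    rw [step2, comp_add x 1 _ hDpos, comp_id_left _ hDpos, comp_const 1 h1R _ hDpos]
  obtain ⟨c, hcR, hDeq⟩ := hC _ hDpos hcommD
  have hUeq : U = r₀⁻¹ * V + c := by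
    have h4 : comp (comp U (comp Vinv (r₀ * x))) (r₀⁻¹ * V) = U := by
      rw [comp_assoc U _ _ hWinvpos hWpos, hWinvW, comp_id_right]
    rw [hDeq] at h4
    rw [← h4, comp_add x c _ hWpos, comp_id_left _ hWpos, comp_const c hcR _ hWpos]
  have hmulR : r₀ * r₁ ∈ R := R.mul_mem h₀ h₁
  have hcancel : r₀⁻¹ * (r₀ * r₁) = r₁ := by
    rw [← mul_assoc, inv_mul_cancel₀ hr₀ne, one_mul]
  have hUJ : comp U (iterOf comp Vinv V (r₀ * r₁)) = U + r₁ := by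
    rw [hUeq, comp_add _ c _ (hIpos _ hmulR), comp_const c hcR _ (hIpos _ hmulR),
        comp_mul r₀⁻¹ V _ (hIpos _ hmulR), comp_const r₀⁻¹ hr₀invR _ (hIpos _ hmulR),
        hVI _ hmulR, mul_add, hcancel]
    ring
  show comp Uinv (U + r₁) = iterOf comp Vinv V (r₀ * r₁)
  rw [← hUJ, ← comp_assoc Uinv U _ hUpos (hIpos _ hmulR), hUinvU,
      comp_id_left _ (hIpos _ hmulR)]
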